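/- Let G be a simple graph with n ≥ 5 vertices and m edges, ordered degree sequence Δ = d_1 ≥ d_2 ≥ ... ≥ d_{n−1} ≥ d_n = δ. Then M_1(G) ≥ Δ² + δ² + (2m − Δ − δ)²/(n−2) + (1/2)(d_2 − d_{n−1})² + (2(n−2)/(n−4))·((2m − Δ − δ)/(n−2) − (d_2 + d_{n−1})/2)². -/
import Mathlib


open Finset
set_option maxHeartbeats 1000000

lemma aux12 (nr a b T Q D0 D3 : ℝ) (hn : 5 ≤ nr) (hQ : T ^ 2 ≤ (nr - 4) * Q) :
    D0 ^ 2 + a ^ 2 + b ^ 2 + D3 ^ 2 + Q ≥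
      D0 ^ 2 + D3 ^ 2 + (a + b + T) ^ 2 / (nr - 2) + (1 / 2) * (a - b) ^ 2
      + (2 * (nr - 2) / (nr - 4)) * ((a + b + T) / (nr - 2) - (a + b) / 2) ^ 2 := by
  have h2 : nr - 2 > 0 := by linarith
  have h4 : nr - 4 > 0 := by linarith
  have hid : D0 ^ 2 + D3 ^ 2 + (a + b + T) ^ 2 / (nr - 2) + (1 / 2) * (a - b) ^ 2
      + (2 * (nr - 2) / (nr - 4)) * ((a + b + T) / (nr - 2) - (a + b) / 2) ^ 2
      = D0 ^ 2 + D3 ^ 2 + a ^ 2 + b ^ 2 + T ^ 2 / (nr - 4) := by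
    field_simp
    ring
  rw [ge_iff_le, hid]
  have : T ^ 2 / (nr - 4) ≤ Q := by
    rw [div_le_iff₀ h4]; linarith
  linarith

theorem stmt12 (n : ℕ) (hn : 5 ≤ n) {V : Type*} [Fintype V] [DecidableEq V]
    (G : SimpleGraph V) [DecidableRel G.Adj]
    (m : ℕ) (hm : m = G.edgeFinset.card)
    (e : Fin n ≃ V) (d : Fin n → ℕ) (hd : ∀ i, d i = G.degree (e i))
    (hsort : Antitone d) :
    ∑ v : V, (G.degree v : ℝ) ^ 2 ≥
      (d ⟨0, by omega⟩ : ℝ) ^ 2 + (d ⟨n - 1, by omega⟩ : ℝ) ^ 2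
      + (2 * (m : ℝ) - (d ⟨0, by omega⟩ : ℝ) - (d ⟨n - 1, by omega⟩ : ℝ)) ^ 2
          / ((n : ℝ) - 2)
      + (1 / 2) * ((d ⟨1, by omega⟩ : ℝ) - (d ⟨n - 2, by omega⟩ : ℝ)) ^ 2
      + (2 * ((n : ℝ) - 2) / ((n : ℝ) - 4)) *
          ((2 * (m : ℝ) - (d ⟨0, by omega⟩ : ℝ) - (d ⟨n - 1, by omega⟩ : ℝ))
              / ((n : ℝ) - 2)
            - ((d ⟨1, by omega⟩ : ℝ) + (d ⟨n - 2, by omega⟩ : ℝ)) / 2) ^ 2 := by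
  set i0 : Fin n := ⟨0, by omega⟩ with hi0
  set i1 : Fin n := ⟨1, by omega⟩ with hi1
  set i2 : Fin n := ⟨n - 2, by omega⟩ with hi2
  set i3 : Fin n := ⟨n - 1, by omega⟩ with hi3
  have h01 : i0 ≠ i1 := by simp [hi0, hi1, Fin.ext_iff]
  have h02 : i0 ≠ i2 := by simp [hi0, hi2, Fin.ext_iff]; omega
  have h03 : i0 ≠ i3 := by simp [hi0, hi3, Fin.ext_iff]; omega
  have h12 : i1 ≠ i2 := by simp [hi1, hi2, Fin.ext_iff]; omega
  have h13 : i1 ≠ i3 := by simp [hi1, hi3, Fin.ext_iff]; omega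
  have h23 : i2 ≠ i3 := by simp [hi2, hi3, Fin.ext_iff]; omega
  obtain ⟨S4, hS4⟩ : ∃ s : Finset (Fin n), s = {i0, i1, i2, i3} := ⟨_, rfl⟩
  have hcard4 : S4.card = 4 := by
    rw [hS4]
    rw [card_insert_of_notMem (by simp [h01, h02, h03]),
      card_insert_of_notMem (by simp [h12, h13]),
      card_insert_of_notMem (by simp [h23]), card_singleton]
  obtain ⟨S, hS⟩ : ∃ s : Finset (Fin n), s = univ \ S4 := ⟨_, rfl⟩
  have hcardS : S.card = n - 4 := by
    rw [hS, card_sdiff_of_subset (subset_univ _), card_univ, Fintype.card_fin, hcard4]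
  have hsplit : ∀ f : Fin n → ℝ, ∑ i, f i = f i0 + f i1 + f i2 + f i3 + ∑ i ∈ S, f i := by
    intro f
    rw [← Finset.sum_sdiff (subset_univ S4), ← hS, hS4]
    rw [Finset.sum_insert (by simp [h01, h02, h03]),
      Finset.sum_insert (by simp [h12, h13]),
      Finset.sum_insert (by simp [h23]), Finset.sum_singleton]
    ring
  have hM : ∑ v : V, (G.degree v : ℝ) ^ 2 = ∑ i : Fin n, (d i : ℝ) ^ 2 := by
    rw [← Equiv.sum_comp e (fun v => (G.degree v : ℝ) ^ 2)]
    exact Finset.sum_congr rfl fun i _ => by rw [hd i]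
  have hsum : ∑ i : Fin n, (d i : ℝ) = 2 * m := by
    have h1 : ∑ i : Fin n, d i = ∑ v : V, G.degree v := by
      rw [← Equiv.sum_comp e (fun v => G.degree v)]
      exact Finset.sum_congr rfl fun i _ => hd i
    have h2 := G.sum_degrees_eq_twice_card_edges
    have h3 : ∑ i : Fin n, d i = 2 * m := by rw [h1, h2, hm]
    calc ∑ i : Fin n, (d i : ℝ) = ((∑ i : Fin n, d i : ℕ) : ℝ) := by push_cast; rfl
      _ = 2 * m := by rw [h3]; push_cast; ring
  obtain ⟨T, hT⟩ : ∃ t : ℝ, t = ∑ i ∈ S, (d i : ℝ) := ⟨_, rfl⟩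
  obtain ⟨Q, hQ⟩ : ∃ q : ℝ, q = ∑ i ∈ S, (d i : ℝ) ^ 2 := ⟨_, rfl⟩
  have hTm : (d i0 : ℝ) + d i1 + d i2 + d i3 + T = 2 * m := by
    rw [hT, ← hsum, hsplit (fun i => (d i : ℝ))]
  have hCS : T ^ 2 ≤ ((n : ℝ) - 4) * Q := by
    have := sq_sum_le_card_mul_sum_sq (s := S) (f := fun i => (d i : ℝ))
    rw [hcardS] at this
    rw [hT, hQ]
    have hc : ((n - 4 : ℕ) : ℝ) = (n : ℝ) - 4 := by
      push_cast [Nat.cast_sub (by omega : 4 ≤ n)]; ring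
    rw [hc] at this
    exact this
  have key := aux12 (n : ℝ) (d i1) (d i2) T Q (d i0) (d i3)
    (by exact_mod_cast Nat.cast_le.mpr hn) hCS
  rw [hM, hsplit (fun i => (d i : ℝ) ^ 2), ← hQ]
  have h2m : 2 * (m : ℝ) - (d i0 : ℝ) - (d i3 : ℝ) = (d i1 : ℝ) + (d i2 : ℝ) + T := by
    linarith
  rw [h2m]
  linarith [key]
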